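/- Define a modified composition on CP maps by F • E = (1/N) F∘E if the scalar N := tr∘F∘E∘(maximally mixed input and discarded output normalization) is nonzero, and F • E = 0 otherwise; restrict to CP maps E satisfying tr(E(1/dim)) = 1 or E = 0. Then • is associative on this restricted set. -/

import Mathlib

open Matrix
open scoped ComplexOrder Classical

/-- Ampliation `id_γ ⊗ Φ` of a map between matrix algebras. -/
def ampL (γ : Type) {α β : Type}
    (Φ : Matrix α α ℂ → Matrix β β ℂ)
    (A : Matrix (γ × α) (γ × α) ℂ) : Matrix (γ × β) (γ × β) ℂ :=
  Matrix.of fun p q => Φ (Matrix.of fun a b => A (p.1, a) (q.1, b)) p.2 q.2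

/-- Complete positivity. -/
def IsCP {α β : Type} [Fintype α] [Fintype β]
    (Φ : Matrix α α ℂ → Matrix β β ℂ) : Prop :=
  ∀ (n : ℕ) (A : Matrix (Fin n × α) (Fin n × α) ℂ),
    A.PosSemidef → (ampL (Fin n) Φ A).PosSemidef

/-- The normalisation scalar `N(Φ)`: the trace of the output of `Φ` on the normalised
maximally mixed state. -/
noncomputable def Nval {α β : Type} [Fintype α] [DecidableEq α] [Fintype β]
    (Φ : Matrix α α ℂ →ₗ[ℂ] Matrix β β ℂ) : ℂ :=
  (Φ (((Fintype.card α : ℂ))⁻¹ • 1)).trace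

/-- The modified ("renormalising") composition `F • E`: divide the usual composite by
its normalisation scalar when that scalar is nonzero, and return the zero map
otherwise. -/
noncomputable def bcomp {α β γ : Type}
    [Fintype α] [DecidableEq α] [Fintype β] [DecidableEq β] [Fintype γ]
    (F : Matrix β β ℂ →ₗ[ℂ] Matrix γ γ ℂ) (E : Matrix α α ℂ →ₗ[ℂ] Matrix β β ℂ) :
    Matrix α α ℂ →ₗ[ℂ] Matrix γ γ ℂ :=
  if Nval (F ∘ₗ E) = 0 then 0 else (Nval (F ∘ₗ E))⁻¹ • (F ∘ₗ E)

section Aux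

variable {n : Type} [Fintype n] [DecidableEq n]

omit [DecidableEq n] in
lemma psd_trace_nonneg {M : Matrix n n ℂ} (hM : M.PosSemidef) : 0 ≤ M.trace := by
  rw [Matrix.trace]
  refine Finset.sum_nonneg fun i _ => ?_
  have := (Matrix.posSemidef_iff_dotProduct_mulVec.mp hM).2 (Pi.single i 1)
  simpa [dotProduct, Pi.single_apply, Matrix.mulVec_single] using this

omit [DecidableEq n] in
lemma psd_trace_zero {M : Matrix n n ℂ} (hM : M.PosSemidef) (h : M.trace = 0) : M = 0 := by
  obtain ⟨B, rfl⟩ : ∃ B : Matrix n n ℂ, M = Bᴴ * B := by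
    open scoped MatrixOrder in
    obtain ⟨B, hB⟩ := CStarAlgebra.nonneg_iff_eq_star_mul_self.mp hM.nonneg
    exact ⟨B, hB⟩
  have ht : ∑ i, ∑ j, star (B j i) * B j i = 0 := by
    simpa [Matrix.trace, Matrix.diag, Matrix.mul_apply, Matrix.conjTranspose_apply] using h
  have hB : ∀ i j, B j i = 0 := by
    intro i j
    have h1 : ∀ i ∈ Finset.univ, (0:ℂ) ≤ ∑ j, star (B j i) * B j i := fun i _ =>
      Finset.sum_nonneg fun j _ => star_mul_self_nonneg _
    have h2 := (Finset.sum_eq_zero_iff_of_nonneg h1).mp ht i (Finset.mem_univ i)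
    have h3 := (Finset.sum_eq_zero_iff_of_nonneg
      (fun j _ => star_mul_self_nonneg _)).mp h2 j (Finset.mem_univ j)
    rcases mul_eq_zero.mp h3 with h' | h'
    · simpa using congrArg star h'
    · exact h'
  have : B = 0 := by ext j i; exact hB i j
  simp [this]

lemma smul_one_sub_psd {M : Matrix n n ℂ} (hM : M.PosSemidef) :
    (M.trace • (1 : Matrix n n ℂ) - M).PosSemidef := by
  have hH := hM.1
  set U : Matrix n n ℂ := (Matrix.IsHermitian.eigenvectorUnitary hH : Matrix n n ℂ) with hU
  have hUU : U * star U = 1 :=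
    Matrix.mem_unitaryGroup_iff.mp (Matrix.IsHermitian.eigenvectorUnitary hH).2
  have hsUU : star U * U = 1 :=
    Matrix.mem_unitaryGroup_iff'.mp (Matrix.IsHermitian.eigenvectorUnitary hH).2
  have hspec := hH.spectral_theorem
  have htr : M.trace = ∑ i, (hH.eigenvalues i : ℂ) := by
    conv_lhs => rw [hspec]
    rw [Unitary.conjStarAlgAut_apply, Matrix.trace_mul_cycle, ← hU, hsUU, one_mul, Matrix.trace_diagonal]
    rfl
  set d : n → ℂ := fun i => M.trace - (hH.eigenvalues i : ℂ) with hd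
  have hdpos : 0 ≤ d := by
    intro i
    have h1 : hH.eigenvalues i ≤ ∑ j, hH.eigenvalues j :=
      Finset.single_le_sum (fun j _ => hM.eigenvalues_nonneg j) (Finset.mem_univ i)
    have : d i = ((∑ j, hH.eigenvalues j - hH.eigenvalues i : ℝ) : ℂ) := by
      simp [hd, htr]
    rw [this]
    exact Complex.zero_le_real.mpr (by linarith)
  have hdiag : (Matrix.diagonal d).PosSemidef := Matrix.PosSemidef.diagonal hdpos
  have key : M.trace • (1 : Matrix n n ℂ) - M = U * Matrix.diagonal d * star U := by
    have h2 : Matrix.diagonal d =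
        M.trace • (1 : Matrix n n ℂ) - Matrix.diagonal (RCLike.ofReal ∘ hH.eigenvalues) := by
      rw [Matrix.smul_one_eq_diagonal, Matrix.diagonal_sub]
      rfl
    rw [h2, Matrix.mul_sub, Matrix.sub_mul]
    rw [mul_smul_comm, smul_mul_assoc, mul_one, hUU]
    rw [Unitary.conjStarAlgAut_apply, ← hU] at hspec
    rw [← hspec]
  rw [key]
  have := hdiag.mul_mul_conjTranspose_same U
  rwa [Matrix.star_eq_conjTranspose]

end Aux

lemma isCP_posSemidef {α β : Type} [Fintype α] [Fintype β]
    {Φ : Matrix α α ℂ → Matrix β β ℂ} (hΦ : IsCP Φ)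
    {M : Matrix α α ℂ} (hM : M.PosSemidef) : (Φ M).PosSemidef := by
  have hA : (M.submatrix (Prod.snd : Fin 1 × α → α) Prod.snd).PosSemidef := hM.submatrix _
  have h := hΦ 1 _ hA
  have heq : Φ M = (ampL (Fin 1) Φ (M.submatrix Prod.snd Prod.snd)).submatrix
      (fun b : β => ((0 : Fin 1), b)) (fun b => ((0 : Fin 1), b)) := rfl
  rw [heq]
  exact h.submatrix _

lemma maxmix_psd (n : Type) [Fintype n] [DecidableEq n] :
    (((Fintype.card n : ℂ))⁻¹ • (1 : Matrix n n ℂ)).PosSemidef := by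
  rw [Matrix.smul_one_eq_diagonal]
  refine Matrix.PosSemidef.diagonal fun i => ?_
  have hc : ((Fintype.card n : ℂ))⁻¹ = Complex.ofReal ((Fintype.card n : ℝ))⁻¹ := by
    push_cast; ring
  have h : (0:ℂ) ≤ Complex.ofReal ((Fintype.card n : ℝ))⁻¹ :=
    Complex.zero_le_real.mpr (inv_nonneg.mpr (Nat.cast_nonneg _))
  show (0:ℂ) ≤ ((Fintype.card n : ℂ))⁻¹
  rw [hc]
  exact h

lemma Nval_smul {α β : Type} [Fintype α] [DecidableEq α] [Fintype β]
    (c : ℂ) (Φ : Matrix α α ℂ →ₗ[ℂ] Matrix β β ℂ) : Nval (c • Φ) = c * Nval Φ := by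
  simp only [Nval, LinearMap.smul_apply, Matrix.trace_smul, smul_eq_mul]

/-- On the set of completely positive maps `E` with `N(E) = 1` or `E = 0`, the modified
composition `•` (renormalise by the normalisation scalar, or return zero) is
associative: `(G • F) • E = G • (F • E)`. -/
theorem bcomp_assoc {α β γ δ : Type}
    [Fintype α] [DecidableEq α] [Nonempty α] [Fintype β] [DecidableEq β] [Nonempty β]
    [Fintype γ] [DecidableEq γ] [Nonempty γ] [Fintype δ] [DecidableEq δ] [Nonempty δ]
    (E : Matrix α α ℂ →ₗ[ℂ] Matrix β β ℂ) (F : Matrix β β ℂ →ₗ[ℂ] Matrix γ γ ℂ)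
    (G : Matrix γ γ ℂ →ₗ[ℂ] Matrix δ δ ℂ)
    (hECP : IsCP ⇑E) (hFCP : IsCP ⇑F) (hGCP : IsCP ⇑G)
    (hEn : Nval E = 1 ∨ E = 0) (hFn : Nval F = 1 ∨ F = 0) (hGn : Nval G = 1 ∨ G = 0) :
    bcomp (bcomp G F) E = bcomp G (bcomp F E) := by
  by_cases hE0 : E = 0
  · subst hE0
    simp [bcomp, Nval]
  have hE1 : Nval E = 1 := hEn.resolve_right hE0
  set dα : ℂ := ((Fintype.card α : ℂ))⁻¹ with hdα
  set dβ : ℂ := ((Fintype.card β : ℂ))⁻¹ with hdβ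
  set ρ : Matrix β β ℂ := E (dα • 1) with hρdef
  have hρ : ρ.PosSemidef := isCP_posSemidef hECP (maxmix_psd α)
  have htrρ : ρ.trace = 1 := hE1
  set a : ℂ := Nval (F ∘ₗ E) with ha
  set b : ℂ := Nval (G ∘ₗ F) with hb
  set N3 : ℂ := (G (F ρ)).trace with hN3def
  have hN3eq : Nval ((G ∘ₗ F) ∘ₗ E) = N3 := rfl
  have hN3eq' : Nval (G ∘ₗ (F ∘ₗ E)) = N3 := rfl
  have haeq : a = (F ρ).trace := rfl
  -- a = 0 → N3 = 0
  have hclaim1 : a = 0 → N3 = 0 := by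
    intro h0
    have hFρ : (F ρ).PosSemidef := isCP_posSemidef hFCP hρ
    have : F ρ = 0 := psd_trace_zero hFρ (haeq ▸ h0)
    rw [hN3def, this]
    simp
  -- b = 0 → N3 = 0
  have hclaim2 : b = 0 → N3 = 0 := by
    intro h0
    have hβ : ((dβ) • (1 : Matrix β β ℂ)).PosSemidef := maxmix_psd β
    have hGF : (G (F (dβ • 1))).PosSemidef := isCP_posSemidef hGCP (isCP_posSemidef hFCP hβ)
    have hz : G (F (dβ • 1)) = 0 := psd_trace_zero hGF h0
    have hdβ0 : dβ ≠ 0 := by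
      rw [hdβ]
      simp [Fintype.card_ne_zero]
    have hGF1 : G (F (1 : Matrix β β ℂ)) = 0 := by
      have : dβ • G (F (1 : Matrix β β ℂ)) = 0 := by
        rw [← map_smul G, ← map_smul F, hz]
      simpa [hdβ0] using this
    have hsub : ((1 : Matrix β β ℂ) - ρ).PosSemidef := by
      have := smul_one_sub_psd hρ
      rwa [htrρ, one_smul] at this
    have hpos1 : (G (F ((1 : Matrix β β ℂ) - ρ))).PosSemidef :=
      isCP_posSemidef hGCP (isCP_posSemidef hFCP hsub)
    have h1 : (0:ℂ) ≤ -N3 := by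
      have := psd_trace_nonneg hpos1
      rw [map_sub F, map_sub G, Matrix.trace_sub, hGF1] at this
      simpa [hN3def] using this
    have h2 : (0:ℂ) ≤ N3 :=
      psd_trace_nonneg (isCP_posSemidef hGCP (isCP_posSemidef hFCP hρ))
    exact le_antisymm (neg_nonneg.mp h1) h2
  by_cases hN3 : N3 = 0
  · -- both sides are zero
    have hLHS : bcomp (bcomp G F) E = 0 := by
      rw [bcomp]
      by_cases hb0 : b = 0
      · rw [show bcomp G F = 0 from if_pos (hb ▸ hb0)]
        simp [Nval]
      · rw [show bcomp G F = b⁻¹ • (G ∘ₗ F) from if_neg (hb ▸ hb0)]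
        rw [if_pos]
        rw [LinearMap.smul_comp, Nval_smul, hN3eq, hN3]
        ring
    have hRHS : bcomp G (bcomp F E) = 0 := by
      rw [bcomp]
      by_cases ha0 : a = 0
      · rw [show bcomp F E = 0 from if_pos (ha ▸ ha0)]
        simp [Nval]
      · rw [show bcomp F E = a⁻¹ • (F ∘ₗ E) from if_neg (ha ▸ ha0)]
        rw [if_pos]
        rw [LinearMap.comp_smul, Nval_smul, hN3eq', hN3]
        ring
    rw [hLHS, hRHS]
  · have ha0 : a ≠ 0 := fun h => hN3 (hclaim1 h)
    have hb0 : b ≠ 0 := fun h => hN3 (hclaim2 h)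
    have hLHS : bcomp (bcomp G F) E = N3⁻¹ • ((G ∘ₗ F) ∘ₗ E) := by
      rw [bcomp, show bcomp G F = b⁻¹ • (G ∘ₗ F) from if_neg (hb ▸ hb0)]
      rw [LinearMap.smul_comp, Nval_smul, hN3eq]
      rw [if_neg (by simp [hb0, hN3])]
      rw [smul_smul]
      congr 1
      field_simp
    have hRHS : bcomp G (bcomp F E) = N3⁻¹ • (G ∘ₗ (F ∘ₗ E)) := by
      rw [bcomp, show bcomp F E = a⁻¹ • (F ∘ₗ E) from if_neg (ha ▸ ha0)]
      rw [LinearMap.comp_smul, Nval_smul, hN3eq']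
      rw [if_neg (by simp [ha0, hN3])]
      rw [smul_smul]
      congr 1
      field_simp
    rw [hLHS, hRHS, LinearMap.comp_assoc]
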